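/- Let c ∈ ℝ. For all natural numbers q ≤ m and α ≤ 2m+1, applying the operator c^{2q} ∂_x^α ∂_y Δ^q to the tensor-product Taylor polynomial p and evaluating at the center gives c^{2q} ∂_x^α ∂_y Δ^q p(x_i, y_j) = c^{2q} Σ_{j} C(q,j) · (2(q−j)+α)!/Δx^{2(q−j)+α} · (2j+1)!/Δy^{2j+1} · c_{2(q−j)+α, 2j+1}, where the sum runs over 0 ≤ j ≤ q with 2(q−j)+α ≤ 2m+1 and 2j+1 ≤ 2m+1. -/

import Mathlib

open Finset

/-- Partial derivative in the first (x) variable. -/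
noncomputable def pd1 (f : ℝ × ℝ → ℝ) : ℝ × ℝ → ℝ :=
  fun p => deriv (fun x => f (x, p.2)) p.1

/-- Partial derivative in the second (y) variable. -/
noncomputable def pd2 (f : ℝ × ℝ → ℝ) : ℝ × ℝ → ℝ :=
  fun p => deriv (fun y => f (p.1, y)) p.2

/-- The Laplacian Δ = ∂_x² + ∂_y². -/
noncomputable def lapl2 (f : ℝ × ℝ → ℝ) : ℝ × ℝ → ℝ :=
  fun p => pd1 (pd1 f) p + pd2 (pd2 f) p

/-- The tensor-product Taylor polynomial
p(x,y) = Σ_{l₁=0}^{2m+1} Σ_{l₂=0}^{2m+1} c_{l₁,l₂} ((x−xᵢ)/Δx)^{l₁} ((y−yⱼ)/Δy)^{l₂}. -/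
noncomputable def taylorPoly (m : ℕ) (xi yj dx dy : ℝ) (co : ℕ → ℕ → ℝ) : ℝ × ℝ → ℝ :=
  fun p => ∑ l₁ ∈ Finset.range (2 * m + 2), ∑ l₂ ∈ Finset.range (2 * m + 2),
    co l₁ l₂ * ((p.1 - xi) / dx) ^ l₁ * ((p.2 - yj) / dy) ^ l₂

/-- polynomial from coefficient array -/
noncomputable def Fc (n : ℕ) (xi yj dx dy : ℝ) (a : ℕ → ℕ → ℝ) : ℝ × ℝ → ℝ :=
  fun p => ∑ l₁ ∈ Finset.range n, ∑ l₂ ∈ Finset.range n,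
    a l₁ l₂ * ((p.1 - xi) / dx) ^ l₁ * ((p.2 - yj) / dy) ^ l₂

noncomputable def Dx (dx : ℝ) (a : ℕ → ℕ → ℝ) : ℕ → ℕ → ℝ :=
  fun l₁ l₂ => ((l₁ : ℝ) + 1) * a (l₁ + 1) l₂ / dx
noncomputable def Dy (dy : ℝ) (a : ℕ → ℕ → ℝ) : ℕ → ℕ → ℝ :=
  fun l₁ l₂ => ((l₂ : ℝ) + 1) * a l₁ (l₂ + 1) / dy

lemma shift_sum (n : ℕ) (g : ℕ → ℝ) (h0 : g 0 = 0) (hn : g n = 0) :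
    ∑ l ∈ range n, g l = ∑ l ∈ range n, g (l + 1) := by
  have h1 := Finset.sum_range_succ g n
  have h2 := Finset.sum_range_succ' g n
  rw [h1] at h2
  rw [h0, hn] at h2
  linarith

lemma pd1_Fc (n : ℕ) (xi yj dx dy : ℝ) (a : ℕ → ℕ → ℝ) (h : ∀ l₂, a n l₂ = 0) :
    pd1 (Fc n xi yj dx dy a) = Fc n xi yj dx dy (Dx dx a) := by
  funext p
  obtain ⟨x, y⟩ := p
  have hd : HasDerivAt (fun x' => ∑ l₁ ∈ range n, ∑ l₂ ∈ range n,
      a l₁ l₂ * ((x' - xi) / dx) ^ l₁ * ((y - yj) / dy) ^ l₂)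
      (∑ l₁ ∈ range n, ∑ l₂ ∈ range n,
        a l₁ l₂ * ((l₁ : ℝ) * ((x - xi) / dx) ^ (l₁ - 1) * (1 / dx)) * ((y - yj) / dy) ^ l₂) x := by
    apply HasDerivAt.fun_sum
    intro l₁ _
    apply HasDerivAt.fun_sum
    intro l₂ _
    have h1 : HasDerivAt (fun x' : ℝ => (x' - xi) / dx) (1 / dx) x := by
      simpa using ((hasDerivAt_id x).sub_const xi).div_const dx
    exact ((h1.pow l₁).const_mul (a l₁ l₂)).mul_const _
  show deriv (fun x' => Fc n xi yj dx dy a (x', y)) x = _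
  simp only [Fc]
  rw [hd.deriv]
  rw [shift_sum n (fun l₁ => ∑ l₂ ∈ range n,
      a l₁ l₂ * ((l₁ : ℝ) * ((x - xi) / dx) ^ (l₁ - 1) * (1 / dx)) * ((y - yj) / dy) ^ l₂)
      (by simp) (by simp [h])]
  apply Finset.sum_congr rfl
  intro l₁ _
  apply Finset.sum_congr rfl
  intro l₂ _
  simp only [Dx, Nat.add_sub_cancel]
  push_cast
  ring

lemma pd2_Fc (n : ℕ) (xi yj dx dy : ℝ) (a : ℕ → ℕ → ℝ) (h : ∀ l₁, a l₁ n = 0) :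
    pd2 (Fc n xi yj dx dy a) = Fc n xi yj dx dy (Dy dy a) := by
  funext p
  obtain ⟨x, y⟩ := p
  have hd : HasDerivAt (fun y' => ∑ l₁ ∈ range n, ∑ l₂ ∈ range n,
      a l₁ l₂ * ((x - xi) / dx) ^ l₁ * ((y' - yj) / dy) ^ l₂)
      (∑ l₁ ∈ range n, ∑ l₂ ∈ range n,
        a l₁ l₂ * ((x - xi) / dx) ^ l₁ * ((l₂ : ℝ) * ((y - yj) / dy) ^ (l₂ - 1) * (1 / dy))) y := by
    apply HasDerivAt.fun_sum
    intro l₁ _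
    apply HasDerivAt.fun_sum
    intro l₂ _
    have h1 : HasDerivAt (fun y' : ℝ => (y' - yj) / dy) (1 / dy) y := by
      simpa using ((hasDerivAt_id y).sub_const yj).div_const dy
    exact (h1.pow l₂).const_mul _
  show deriv (fun y' => Fc n xi yj dx dy a (x, y')) y = _
  simp only [Fc]
  rw [hd.deriv]
  apply Finset.sum_congr rfl
  intro l₁ _
  rw [shift_sum n (fun l₂ =>
      a l₁ l₂ * ((x - xi) / dx) ^ l₁ * ((l₂ : ℝ) * ((y - yj) / dy) ^ (l₂ - 1) * (1 / dy)))
      (by simp) (by simp [h])]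
  apply Finset.sum_congr rfl
  intro l₂ _
  simp only [Dy, Nat.add_sub_cancel]
  push_cast
  ring

lemma Fc_eval (n : ℕ) (hn : 0 < n) (xi yj dx dy : ℝ) (a : ℕ → ℕ → ℝ) :
    Fc n xi yj dx dy a (xi, yj) = a 0 0 := by
  simp only [Fc, sub_self, zero_div]
  rw [Finset.sum_eq_single 0]
  · rw [Finset.sum_eq_single 0]
    · simp
    · intro b _ hb; simp [zero_pow hb]
    · intro h; exact absurd (Finset.mem_range.mpr hn) h
  · intro b _ hb
    apply Finset.sum_eq_zero
    intro l₂ _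
    simp [zero_pow hb]
  · intro h; exact absurd (Finset.mem_range.mpr hn) h

def Pz (n : ℕ) (a : ℕ → ℕ → ℝ) : Prop := ∀ l₁ l₂, n ≤ l₁ ∨ n ≤ l₂ → a l₁ l₂ = 0

noncomputable def Lc (dx dy : ℝ) (a : ℕ → ℕ → ℝ) : ℕ → ℕ → ℝ :=
  fun l₁ l₂ => Dx dx (Dx dx a) l₁ l₂ + Dy dy (Dy dy a) l₁ l₂

lemma Pz_Dx {n : ℕ} {dx : ℝ} {a : ℕ → ℕ → ℝ} (h : Pz n a) : Pz n (Dx dx a) := by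
  intro l₁ l₂ hl
  simp only [Dx]
  rw [h (l₁ + 1) l₂ (by omega)]
  ring

lemma Pz_Dy {n : ℕ} {dy : ℝ} {a : ℕ → ℕ → ℝ} (h : Pz n a) : Pz n (Dy dy a) := by
  intro l₁ l₂ hl
  simp only [Dy]
  rw [h l₁ (l₂ + 1) (by omega)]
  ring

lemma Pz_Lc {n : ℕ} {dx dy : ℝ} {a : ℕ → ℕ → ℝ} (h : Pz n a) : Pz n (Lc dx dy a) := by
  intro l₁ l₂ hl
  simp only [Lc]
  rw [Pz_Dx (Pz_Dx h) l₁ l₂ hl, Pz_Dy (Pz_Dy h) l₁ l₂ hl, add_zero]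

lemma lapl2_Fc (n : ℕ) (xi yj dx dy : ℝ) (a : ℕ → ℕ → ℝ) (ha : Pz n a) :
    lapl2 (Fc n xi yj dx dy a) = Fc n xi yj dx dy (Lc dx dy a) := by
  have hx : ∀ l₂, a n l₂ = 0 := fun l₂ => ha n l₂ (Or.inl le_rfl)
  have hy : ∀ l₁, a l₁ n = 0 := fun l₁ => ha l₁ n (Or.inr le_rfl)
  funext p
  show pd1 (pd1 (Fc n xi yj dx dy a)) p + pd2 (pd2 (Fc n xi yj dx dy a)) p = _
  rw [pd1_Fc n xi yj dx dy a hx, pd1_Fc n xi yj dx dy _ (fun l₂ => Pz_Dx ha n l₂ (Or.inl le_rfl)),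
      pd2_Fc n xi yj dx dy a hy, pd2_Fc n xi yj dx dy _ (fun l₁ => Pz_Dy ha l₁ n (Or.inr le_rfl))]
  simp only [Fc, Lc, ← Finset.sum_add_distrib]
  apply Finset.sum_congr rfl; intro l₁ _
  apply Finset.sum_congr rfl; intro l₂ _
  ring

lemma lapl2_iter_Fc (n : ℕ) (xi yj dx dy : ℝ) (q : ℕ) (a : ℕ → ℕ → ℝ) (ha : Pz n a) :
    lapl2^[q] (Fc n xi yj dx dy a) = Fc n xi yj dx dy ((Lc dx dy)^[q] a) ∧
      Pz n ((Lc dx dy)^[q] a) := by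
  induction q with
  | zero => exact ⟨rfl, ha⟩
  | succ q ih =>
    rw [Function.iterate_succ_apply', Function.iterate_succ_apply', ih.1,
        lapl2_Fc n xi yj dx dy _ ih.2]
    exact ⟨rfl, Pz_Lc ih.2⟩

lemma pd1_iter_Fc (n : ℕ) (xi yj dx dy : ℝ) (α : ℕ) :
    ∀ a : ℕ → ℕ → ℝ, Pz n a →
      pd1^[α] (Fc n xi yj dx dy a) = Fc n xi yj dx dy ((Dx dx)^[α] a) := by
  induction α with
  | zero => intro a _; rfl
  | succ α ih =>
    intro a ha
    rw [Function.iterate_succ_apply, Function.iterate_succ_apply,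
        pd1_Fc n xi yj dx dy a (fun l₂ => ha n l₂ (Or.inl le_rfl))]
    exact ih _ (Pz_Dx ha)

lemma struct (n : ℕ) (xi yj dx dy : ℝ) (q α : ℕ) (a : ℕ → ℕ → ℝ) (ha : Pz n a) :
    pd1^[α] (pd2 (lapl2^[q] (Fc n xi yj dx dy a)))
      = Fc n xi yj dx dy ((Dx dx)^[α] (Dy dy ((Lc dx dy)^[q] a))) := by
  obtain ⟨h1, h2⟩ := lapl2_iter_Fc n xi yj dx dy q a ha
  rw [h1, pd2_Fc n xi yj dx dy _ (fun l₁ => h2 l₁ n (Or.inr le_rfl))]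
  exact pd1_iter_Fc n xi yj dx dy α _ (Pz_Dy h2)

noncomputable def d1 (dx : ℝ) : Module.End ℝ (ℕ → ℕ → ℝ) where
  toFun := Dx dx
  map_add' a b := by funext l₁ l₂; simp [Dx]; ring
  map_smul' r a := by funext l₁ l₂; simp [Dx]; ring

noncomputable def d2 (dy : ℝ) : Module.End ℝ (ℕ → ℕ → ℝ) where
  toFun := Dy dy
  map_add' a b := by funext l₁ l₂; simp [Dy]; ring
  map_smul' r a := by funext l₁ l₂; simp [Dy]; ring

lemma d1_pow_apply (dx : ℝ) (k : ℕ) (a : ℕ → ℕ → ℝ) : (d1 dx ^ k) a = (Dx dx)^[k] a := by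
  rw [Module.End.pow_apply]; rfl

lemma d2_pow_apply (dy : ℝ) (k : ℕ) (a : ℕ → ℕ → ℝ) : (d2 dy ^ k) a = (Dy dy)^[k] a := by
  rw [Module.End.pow_apply]; rfl

lemma d12_comm (dx dy : ℝ) : Commute (d1 dx) (d2 dy) := by
  apply LinearMap.ext
  intro a
  show Dx dx (Dy dy a) = Dy dy (Dx dx a)
  funext l₁ l₂
  simp [Dx, Dy]; ring

lemma Lc_pow (dx dy : ℝ) (q : ℕ) (a : ℕ → ℕ → ℝ) :
    (Lc dx dy)^[q] a = ((d1 dx ^ 2 + d2 dy ^ 2) ^ q) a := by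
  rw [Module.End.pow_apply]
  have : Lc dx dy = ⇑(d1 dx ^ 2 + d2 dy ^ 2) := by
    funext a l₁ l₂
    show _ = ((d1 dx ^ 2) a + (d2 dy ^ 2) a) l₁ l₂
    rw [d1_pow_apply, d2_pow_apply]
    rfl
  rw [this]

lemma Dx_iter (dx : ℝ) (k : ℕ) : ∀ (a : ℕ → ℕ → ℝ) (l₁ l₂ : ℕ),
    (Dx dx)^[k] a l₁ l₂ = (((l₁ + k).factorial : ℝ) / (l₁.factorial : ℝ)) / dx ^ k * a (l₁ + k) l₂ := by
  induction k with
  | zero => intro a l₁ l₂; simp [div_self (Nat.cast_ne_zero.mpr (Nat.factorial_ne_zero _) : (Nat.factorial _ : ℝ) ≠ 0)]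
  | succ k ih =>
    intro a l₁ l₂
    rw [Function.iterate_succ_apply, ih]
    show _ = (((l₁ + (k + 1)).factorial : ℝ) / _) / _ * _
    have : l₁ + (k + 1) = (l₁ + k) + 1 := by omega
    rw [this, Nat.factorial_succ]
    simp only [Dx]
    push_cast
    ring

lemma Dy_iter (dy : ℝ) (k : ℕ) : ∀ (a : ℕ → ℕ → ℝ) (l₁ l₂ : ℕ),
    (Dy dy)^[k] a l₁ l₂ = (((l₂ + k).factorial : ℝ) / (l₂.factorial : ℝ)) / dy ^ k * a l₁ (l₂ + k) := by
  induction k with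
  | zero => intro a l₁ l₂; simp [div_self (Nat.cast_ne_zero.mpr (Nat.factorial_ne_zero _) : (Nat.factorial _ : ℝ) ≠ 0)]
  | succ k ih =>
    intro a l₁ l₂
    rw [Function.iterate_succ_apply, ih]
    show _ = (((l₂ + (k + 1)).factorial : ℝ) / _) / _ * _
    have : l₂ + (k + 1) = (l₂ + k) + 1 := by omega
    rw [this, Nat.factorial_succ]
    simp only [Dy]
    push_cast
    ring

lemma op_expand (dx dy : ℝ) (q α : ℕ) :
    d1 dx ^ α * d2 dy * (d1 dx ^ 2 + d2 dy ^ 2) ^ q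
      = ∑ j ∈ Finset.range (q + 1),
          (q.choose j : Module.End ℝ (ℕ → ℕ → ℝ)) *
            (d1 dx ^ (2 * (q - j) + α) * d2 dy ^ (2 * j + 1)) := by
  have hcomm := d12_comm dx dy
  rw [add_comm (d1 dx ^ 2), (hcomm.symm.pow_pow 2 2).add_pow q, Finset.mul_sum]
  apply Finset.sum_congr rfl
  intro j hj
  rw [← pow_mul (d2 dy) 2 j, ← pow_mul (d1 dx) 2 (q - j)]
  have h21 : Commute (d2 dy ^ (2 * j + 1)) (d1 dx ^ (2 * (q - j))) := hcomm.symm.pow_pow _ _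
  calc d1 dx ^ α * d2 dy * (d2 dy ^ (2 * j) * d1 dx ^ (2 * (q - j)) * (q.choose j : Module.End ℝ (ℕ → ℕ → ℝ)))
      = d1 dx ^ α * (d2 dy * d2 dy ^ (2 * j)) * d1 dx ^ (2 * (q - j)) * (q.choose j : Module.End ℝ (ℕ → ℕ → ℝ)) := by
        simp only [mul_assoc]
    _ = d1 dx ^ α * d2 dy ^ (2 * j + 1) * d1 dx ^ (2 * (q - j)) * (q.choose j : Module.End ℝ (ℕ → ℕ → ℝ)) := by
        rw [← pow_succ' (d2 dy) (2 * j)]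
    _ = d1 dx ^ α * (d2 dy ^ (2 * j + 1) * d1 dx ^ (2 * (q - j))) * (q.choose j : Module.End ℝ (ℕ → ℕ → ℝ)) := by
        rw [mul_assoc (d1 dx ^ α)]
    _ = d1 dx ^ α * (d1 dx ^ (2 * (q - j)) * d2 dy ^ (2 * j + 1)) * (q.choose j : Module.End ℝ (ℕ → ℕ → ℝ)) := by
        rw [h21.eq]
    _ = d1 dx ^ (2 * (q - j) + α) * d2 dy ^ (2 * j + 1) * (q.choose j : Module.End ℝ (ℕ → ℕ → ℝ)) := by
        rw [← mul_assoc, ← pow_add, add_comm α]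
    _ = (q.choose j : Module.End ℝ (ℕ → ℕ → ℝ)) * (d1 dx ^ (2 * (q - j) + α) * d2 dy ^ (2 * j + 1)) := by
        rw [(Nat.cast_commute (q.choose j) _).eq]

lemma key_expand (dx dy : ℝ) (q α : ℕ) (a : ℕ → ℕ → ℝ) (l₁ l₂ : ℕ) :
    (Dx dx)^[α] (Dy dy ((Lc dx dy)^[q] a)) l₁ l₂
      = ∑ j ∈ Finset.range (q + 1), (q.choose j : ℝ) *
          ((Dx dx)^[2 * (q - j) + α] ((Dy dy)^[2 * j + 1] a) l₁ l₂) := by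
  have h1 : (Dx dx)^[α] (Dy dy ((Lc dx dy)^[q] a))
      = (d1 dx ^ α * d2 dy * (d1 dx ^ 2 + d2 dy ^ 2) ^ q) a := by
    rw [Module.End.mul_apply, Module.End.mul_apply, ← Lc_pow, ← d1_pow_apply]
    rfl
  rw [h1, op_expand]
  rw [LinearMap.sum_apply]
  rw [Finset.sum_apply, Finset.sum_apply]
  apply Finset.sum_congr rfl
  intro j hj
  rw [Module.End.mul_apply, Module.End.natCast_apply, Module.End.mul_apply,
      d1_pow_apply, d2_pow_apply]
  simp [nsmul_eq_mul]

noncomputable def trunc (n : ℕ) (co : ℕ → ℕ → ℝ) : ℕ → ℕ → ℝ :=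
  fun l₁ l₂ => if l₁ < n ∧ l₂ < n then co l₁ l₂ else 0


theorem neumann_corner_hermite_cbc_formula
    (m : ℕ) (xi yj dx dy : ℝ) (hdx : dx ≠ 0) (hdy : dy ≠ 0) (co : ℕ → ℕ → ℝ)
    (c : ℝ) :
    ∀ q α : ℕ, q ≤ m → α ≤ 2 * m + 1 →
      c ^ (2 * q) *
        (pd1^[α] (pd2 (lapl2^[q] (taylorPoly m xi yj dx dy co)))) (xi, yj)
      = c ^ (2 * q) *
          ∑ j ∈ (Finset.range (q + 1)).filter
              (fun j => 2 * (q - j) + α ≤ 2 * m + 1 ∧ 2 * j + 1 ≤ 2 * m + 1),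
            (q.choose j : ℝ) *
              (((2 * (q - j) + α).factorial : ℝ) / dx ^ (2 * (q - j) + α)) *
              (((2 * j + 1).factorial : ℝ) / dy ^ (2 * j + 1)) *
              co (2 * (q - j) + α) (2 * j + 1) := by
  intro q α hq hα
  set n := 2 * m + 2 with hn
  have htp : taylorPoly m xi yj dx dy co = Fc n xi yj dx dy (trunc n co) := by
    funext p
    apply Finset.sum_congr rfl
    intro l₁ hl₁
    apply Finset.sum_congr rfl
    intro l₂ hl₂
    rw [trunc, if_pos ⟨Finset.mem_range.mp hl₁, Finset.mem_range.mp hl₂⟩]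
  have hPz : Pz n (trunc n co) := by
    intro l₁ l₂ hl
    rw [trunc, if_neg (by omega)]
  congr 1
  rw [htp, struct n xi yj dx dy q α _ hPz, Fc_eval n (by omega) xi yj dx dy,
      key_expand dx dy q α _ 0 0, Finset.sum_filter]
  apply Finset.sum_congr rfl
  intro j hj
  rw [Dx_iter, Dy_iter]
  simp only [Nat.zero_add, Nat.factorial_zero, Nat.cast_one, div_one]
  by_cases hc : 2 * (q - j) + α ≤ 2 * m + 1 ∧ 2 * j + 1 ≤ 2 * m + 1
  · rw [if_pos hc, trunc, if_pos (by omega)]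
    ring
  · rw [if_neg hc, trunc, if_neg (by omega)]
    ring
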